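/- Let G = C_{2n+1} be the odd cycle with vertex probabilities p_k > 0 summing to 1 and satisfying p_k + p_{k+1} ≤ 1/n for all k (indices mod 2n+1). Then the point a with a_{x_k} = n·p_k lies in the vertex-packing polytope VP(C_{2n+1}) (the convex hull of indicator vectors of independent sets), and Σ_k −p_k log(a_{x_k}) = H(π) − log n, where H(π) = Σ_k −p_k log p_k. -/

import Mathlib

open Finset

private lemma ceil_split14 (x t : ℝ) (ht0 : 0 ≤ t) (ht1 : t < 1) :
    (⌈x - t⌉ : ℤ) = ⌊x⌋ + (if t < Int.fract x then 1 else 0) := by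
  have hx : x - t = (Int.fract x - t) + (⌊x⌋ : ℝ) := by
    have := Int.floor_add_fract x; linarith
  rw [hx, Int.ceil_add_intCast]
  have hf0 := Int.fract_nonneg x
  have hf1 := Int.fract_lt_one x
  split_ifs with h
  · have : ⌈Int.fract x - t⌉ = 1 := by
      rw [Int.ceil_eq_iff]
      constructor <;> push_cast <;> linarith
    omega
  · have : ⌈Int.fract x - t⌉ = 0 := by
      rw [Int.ceil_eq_zero_iff]
      constructor <;> simp <;> linarith
    omega

private lemma main14 (n : ℕ) (hn : 1 ≤ n) (a : ZMod (2 * n + 1) → ℝ)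
    (hpos : ∀ k, 0 < a k) (hStot : ∑ k, a k = n)
    (hedge : ∀ k, a k + a (k + 1) ≤ 1) :
    a ∈ convexHull ℝ {v : ZMod (2 * n + 1) → ℝ |
        ∃ J : Finset (ZMod (2 * n + 1)), (∀ j ∈ J, j + 1 ∉ J) ∧
          v = fun j => if j ∈ J then 1 else 0} := by
  haveI : NeZero (2 * n + 1) := ⟨by omega⟩
  have hm : 2 * n + 1 = 2 * n + 1 := rfl
  -- sum over range = sum over ZMod
  have hsum_eq : ∀ f : ZMod (2*n+1) → ℝ, ∑ i ∈ range (2*n+1), f (i : ZMod (2*n+1)) = ∑ j, f j := by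
    intro f
    refine Finset.sum_nbij' (fun i => (i : ZMod (2*n+1))) (fun j => j.val) ?_ ?_ ?_ ?_ ?_
    · intro i _; exact mem_univ _
    · intro j _; exact mem_range.2 (ZMod.val_lt j)
    · intro i hi; exact ZMod.val_natCast_of_lt (mem_range.1 hi)
    · intro j _; exact ZMod.natCast_rightInverse j
    · intro i _; rfl
  -- cumulative sums
  set c : ℕ → ℝ := fun k => ∑ i ∈ range k, a (i : ZMod (2*n+1)) with hc
  have hc0 : c 0 = 0 := by simp [hc]
  have hcsucc : ∀ k, c (k + 1) = c k + a (k : ZMod (2*n+1)) := fun k => Finset.sum_range_succ _ k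
  have hcm : c (2*n+1) = n := by
    show ∑ i ∈ range (2*n+1), a (i : ZMod (2*n+1)) = (n:ℝ)
    rw [hsum_eq a]; exact hStot
  have ha1 : ∀ k : ZMod (2*n+1), a k < 1 := fun k =>
    lt_of_lt_of_le (lt_add_of_pos_right _ (hpos (k + 1))) (hedge k)
  have hmono : Monotone c := monotone_nat_of_le_succ (fun k => by
    rw [hcsucc]; linarith [hpos (k : ZMod (2*n+1))])
  have hedge' : ∀ k : ℕ, c (k + 2) ≤ c k + 1 := by
    intro k
    have h1 : c (k + 2) = c k + a (k : ZMod (2*n+1)) + a ((k : ZMod (2*n+1)) + 1) := by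
      rw [show k + 2 = (k+1)+1 from rfl, hcsucc, hcsucc]
      push_cast
      ring
    rw [h1]; linarith [hedge (k : ZMod (2*n+1))]
  -- breakpoints
  set T : Finset ℝ := (range (2*n+2)).image (fun j => Int.fract (c j)) with hT
  set L : List ℝ := T.sort (· ≤ ·) with hL
  set len := L.length with hlen
  have hmemT : ∀ t, t ∈ L ↔ t ∈ T := fun t => Finset.mem_sort _
  have hT01 : ∀ t ∈ T, 0 ≤ t ∧ t < 1 := by
    intro t ht
    rw [hT, Finset.mem_image] at ht
    obtain ⟨j, _, rfl⟩ := ht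
    exact ⟨Int.fract_nonneg _, Int.fract_lt_one _⟩
  have h0T : (0 : ℝ) ∈ T := by
    rw [hT, Finset.mem_image]
    exact ⟨0, mem_range.2 (by omega), by simp [hc0]⟩
  have hlenpos : 0 < len := by
    rw [hlen, hL, Finset.length_sort]
    exact Finset.card_pos.2 ⟨0, h0T⟩
  set E : ℕ → ℝ := fun i => if h : i < len then L.get ⟨i, h⟩ else 1 with hE
  have hsortlt : L.SortedLT := Finset.sortedLT_sort T
  have hEmemT : ∀ i, i < len → E i ∈ T := by
    intro i hi
    rw [hE]; simp only [hi, dif_pos]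
    exact (hmemT _).1 (L.get_mem _)
  have hErange : ∀ i, i < len → 0 ≤ E i ∧ E i < 1 := fun i hi => hT01 _ (hEmemT i hi)
  have hEstrict : ∀ i j, i < j → j < len → E i < E j := by
    intro i j hij hj
    have hi : i < len := lt_trans hij hj
    rw [hE]; simp only [hi, hj, dif_pos]
    exact List.SortedLT.strictMono_get hsortlt (by exact hij)
  have hElen : ∀ i, len ≤ i → E i = 1 := by
    intro i hi; exact dif_neg (not_lt.2 hi)
  have hEmono : ∀ i j, i ≤ j → E i ≤ E j := by
    intro i j hij
    rcases lt_or_ge j len with hj | hj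
    · rcases eq_or_lt_of_le hij with rfl | h
      · exact le_refl _
      · exact le_of_lt (hEstrict i j h hj)
    · rw [hElen j hj]
      rcases lt_or_ge i len with hi | hi
      · exact le_of_lt (hErange i hi).2
      · rw [hElen i hi]
  have hE0 : E 0 = 0 := by
    have h0L : (0:ℝ) ∈ L := (hmemT _).2 h0T
    obtain ⟨⟨i, hi⟩, hgi⟩ := List.mem_iff_get.1 h0L
    have : E i = 0 := by rw [hE]; exact (dif_pos (show i < len from hi)).trans hgi
    have h1 := hEmono 0 i (Nat.zero_le _)
    have h2 := (hErange 0 hlenpos).1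
    linarith
  set lam : ℕ → ℝ := fun i => E (i + 1) - E i with hlam
  have hlam0 : ∀ i, 0 ≤ lam i := fun i => sub_nonneg.2 (hEmono i (i+1) (Nat.le_succ _))
  have hlamsum : ∑ i ∈ range len, lam i = 1 := by
    rw [hlam]
    rw [Finset.sum_range_sub E len, hE0, hElen len (le_refl _)]
    ring
  -- key partial sum lemma
  have hpartial : ∀ jx, jx < len → ∑ i ∈ range len, lam i * (if E i < E jx then 1 else 0) = E jx := by
    intro jx hjx
    have : ∀ i ∈ range len, lam i * (if E i < E jx then 1 else 0) = if E i < E jx then lam i else 0 := by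
      intro i _; split_ifs <;> ring
    rw [Finset.sum_congr rfl this, Finset.sum_ite, Finset.sum_const_zero, add_zero]
    have hfil : (range len).filter (fun i => E i < E jx) = range jx := by
      ext i
      simp only [mem_filter, mem_range]
      constructor
      · rintro ⟨hi, hEi⟩
        by_contra h
        push_neg at h
        exact absurd hEi (not_lt_of_ge (hEmono jx i h))
      · intro h
        exact ⟨lt_trans h hjx, hEstrict i jx h hjx⟩
    rw [hfil, hlam, Finset.sum_range_sub E jx, hE0, sub_zero]
  -- key lemma A
  have keyA : ∀ x : ℝ, Int.fract x ∈ T → ∑ i ∈ range len, lam i * (⌈x - E i⌉ : ℝ) = x := by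
    intro x hx
    obtain ⟨⟨jx, hjx⟩, hgjx⟩ := List.mem_iff_get.1 ((hmemT _).2 hx)
    have hEjx : E jx = Int.fract x := by rw [hE]; exact (dif_pos (show jx < len from hjx)).trans hgjx
    have hstep : ∀ i ∈ range len, lam i * (⌈x - E i⌉ : ℝ)
        = lam i * (⌊x⌋ : ℝ) + lam i * (if E i < E jx then 1 else 0) := by
      intro i hi
      have hEi := hErange i (mem_range.1 hi)
      rw [ceil_split14 x (E i) hEi.1 hEi.2]
      rw [hEjx]
      push_cast
      split_ifs <;> ring
    rw [Finset.sum_congr rfl hstep, Finset.sum_add_distrib, ← Finset.sum_mul,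
      hlamsum, hpartial jx hjx, hEjx]
    have := Int.floor_add_fract x
    linarith
  -- N values
  have hcT : ∀ k, k ≤ 2*n+1 → Int.fract (c k) ∈ T := by
    intro k hk
    rw [hT, Finset.mem_image]
    exact ⟨k, mem_range.2 (by omega), rfl⟩
  have hN01 : ∀ i k : ℕ, i < len →
      ⌈c (k + 1) - E i⌉ - ⌈c k - E i⌉ = 0 ∨ ⌈c (k + 1) - E i⌉ - ⌈c k - E i⌉ = 1 := by
    intro i k hi
    have h1 : c k ≤ c (k + 1) := hmono (Nat.le_succ k)
    have h2 : c (k + 1) ≤ c k + 1 := by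
      rw [hcsucc]; linarith [ha1 (k : ZMod (2*n+1))]
    have hle : ⌈c k - E i⌉ ≤ ⌈c (k+1) - E i⌉ := Int.ceil_le_ceil (by linarith)
    have hle2 : ⌈c (k+1) - E i⌉ ≤ ⌈c k - E i⌉ + 1 := by
      have : ⌈c (k+1) - E i⌉ ≤ ⌈(c k - E i) + 1⌉ := Int.ceil_le_ceil (by linarith)
      rwa [Int.ceil_add_one] at this
    omega
  -- independent sets
  set J : ℕ → Finset (ZMod (2*n+1)) := fun i =>
    univ.filter (fun j => ⌈c (j.val + 1) - E i⌉ - ⌈c j.val - E i⌉ = 1) with hJ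
  have hmemJ : ∀ i (j : ZMod (2*n+1)), j ∈ J i ↔ ⌈c (j.val + 1) - E i⌉ - ⌈c j.val - E i⌉ = 1 := by
    intro i j; rw [hJ]; simp
  have hindep : ∀ i, i < len → ∀ j ∈ J i, j + 1 ∉ J i := by
    intro i hi j hj hj1
    have hEi := hErange i hi
    rw [hmemJ] at hj hj1
    have hjv : j.val < 2*n+1 := ZMod.val_lt j
    rcases Nat.lt_or_ge j.val (2*n) with hv | hv
    · -- non-wrap case
      have hval : (j + 1).val = j.val + 1 := by
        have : j + 1 = ((j.val + 1 : ℕ) : ZMod (2*n+1)) := by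
          push_cast [ZMod.natCast_rightInverse j]; ring
        rw [this, ZMod.val_natCast_of_lt (by omega)]
      rw [hval] at hj1
      have := hedge' j.val
      have hceil : ⌈c (j.val + 2) - E i⌉ ≤ ⌈c j.val - E i⌉ + 1 := by
        have h := Int.ceil_le_ceil (show c (j.val + 2) - E i ≤ (c j.val - E i) + 1 by linarith)
        rwa [Int.ceil_add_one] at h
      have h12 : j.val + 1 + 1 = j.val + 2 := rfl
      rw [h12] at hj1
      omega
    · -- wrap case, j.val = m - 1
      have hveq : j.val = 2*n := by omega
      have hj1v : (j + 1).val = 0 := by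
        have : j + 1 = ((j.val + 1 : ℕ) : ZMod (2*n+1)) := by
          push_cast [ZMod.natCast_rightInverse j]; ring
        rw [this, hveq]
        simp
      rw [hj1v] at hj1
      -- hj1 : ⌈c 1 - E i⌉ - ⌈c 0 - E i⌉ = 1
      rw [hveq] at hj
      
      -- hj : ⌈c (2*n+1) - E i⌉ - ⌈c (2*n) - E i⌉ = 1
      have hceilm : ⌈c (2*n+1) - E i⌉ = n := by
        rw [hcm]
        have hcg : ⌈(n:ℝ) - E i⌉ = ⌈-(E i) + ((n:ℤ):ℝ)⌉ := by
          congr 1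
          push_cast; ring
        rw [hcg, Int.ceil_add_intCast]
        have : ⌈-(E i)⌉ = 0 := by
          rw [Int.ceil_eq_zero_iff]; constructor <;> simp <;> linarith [hEi.1, hEi.2]
        omega
      have hc0' : ⌈c 0 - E i⌉ = 0 := by
        rw [hc0]
        have : (0:ℝ) - E i = -(E i) := by ring
        rw [this, Int.ceil_eq_zero_iff]; constructor <;> simp <;> linarith [hEi.1, hEi.2]
      -- c 1 ≤ c (2*n) - (n-1)
      have hwrap : c 1 ≤ c (2*n) - ((n:ℝ) - 1) := by
        have h1 := hedge' (2*n)
        have h2 : (2*n) + 2 = (2*n+1) + 1 := by omega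
        rw [h2] at h1
        have h3 : c ((2*n+1) + 1) = c (2*n+1) + a ((2*n+1 : ℕ) : ZMod (2*n+1)) := hcsucc (2*n+1)
        have h4 : ((2*n+1 : ℕ) : ZMod (2*n+1)) = 0 := ZMod.natCast_self (2*n+1)
        have h5 : c 1 = a ((0:ℕ) : ZMod (2*n+1)) := by rw [hcsucc 0, hc0]; ring
        rw [h3, h4, hcm] at h1
        rw [h5]
        push_cast at h5 ⊢
        linarith
      have h := Int.ceil_le_ceil (show c 1 - E i ≤ (c (2*n) - E i) + (((-(n:ℤ) + 1) : ℤ) : ℝ) by push_cast; linarith)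
      rw [Int.ceil_add_intCast] at h
      simp only [zero_add] at hj1
      rw [hceilm] at hj
      rw [hc0'] at hj1
      omega
  -- coordinate identity
  set z : ℕ → ZMod (2*n+1) → ℝ := fun i => fun j => if j ∈ J i then 1 else 0 with hz
  have hcoord : ∀ jj : ZMod (2*n+1), ∑ i ∈ range len, lam i * z i jj = a jj := by
    intro jj
    have hjv : jj.val < 2*n+1 := ZMod.val_lt jj
    have hz1 : ∀ i ∈ range len, lam i * z i jj
        = lam i * (⌈c (jj.val + 1) - E i⌉ : ℝ) - lam i * (⌈c jj.val - E i⌉ : ℝ) := by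
      intro i hi
      have hzv : z i jj = if ⌈c (jj.val + 1) - E i⌉ - ⌈c jj.val - E i⌉ = 1 then 1 else 0 := by
        simp only [hz, hJ, mem_filter, mem_univ, true_and]
      rw [hzv]
      rcases hN01 i jj.val (mem_range.1 hi) with h | h
      · have hint : ⌈c (jj.val + 1) - E i⌉ = ⌈c jj.val - E i⌉ := by omega
        rw [if_neg (by omega), hint]; ring
      · have hint : ⌈c (jj.val + 1) - E i⌉ = ⌈c jj.val - E i⌉ + 1 := by omega
        rw [if_pos h, hint]; push_cast; ring
    rw [Finset.sum_congr rfl hz1, Finset.sum_sub_distrib,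
      keyA (c (jj.val + 1)) (hcT _ (by omega)), keyA (c jj.val) (hcT _ (by omega))]
    rw [hcsucc jj.val, ZMod.natCast_rightInverse jj]
    ring
  -- assemble
  have hmem : (range len).centerMass lam z ∈ convexHull ℝ {v : ZMod (2*n+1) → ℝ |
        ∃ J : Finset (ZMod (2*n+1)), (∀ j ∈ J, j + 1 ∉ J) ∧ v = fun j => if j ∈ J then 1 else 0} := by
    apply Finset.centerMass_mem_convexHull
    · intro i _; exact hlam0 i
    · rw [hlamsum]; norm_num
    · intro i hi
      exact ⟨J i, hindep i (mem_range.1 hi), rfl⟩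
  rw [Finset.centerMass_eq_of_sum_1 _ _ hlamsum] at hmem
  have : a = ∑ i ∈ range len, lam i • z i := by
    funext jj
    rw [Finset.sum_apply]
    simp only [Pi.smul_apply, smul_eq_mul]
    exact (hcoord jj).symm
  rwa [this]


theorem stmt14 (n : ℕ) (hn : 1 ≤ n) (p : ZMod (2 * n + 1) → ℝ) (hp : ∀ k, 0 < p k)
    (hsum : ∑ k, p k = 1) (hbd : ∀ k, p k + p (k + 1) ≤ 1 / (n : ℝ))
    (a : ZMod (2 * n + 1) → ℝ) (ha : ∀ k, a k = n * p k) :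
    a ∈ convexHull ℝ {v : ZMod (2 * n + 1) → ℝ |
        ∃ J : Finset (ZMod (2 * n + 1)), (∀ j ∈ J, j + 1 ∉ J) ∧
          v = fun j => if j ∈ J then 1 else 0} ∧
    ∑ k, -(p k) * Real.log (a k) = (∑ k, -(p k) * Real.log (p k)) - Real.log n := by
  have hn' : (0:ℝ) < n := by positivity
  constructor
  · apply main14 n hn a
    · intro k; rw [ha]; exact mul_pos hn' (hp k)
    · have : ∀ k, a k = n * p k := ha
      calc ∑ k, a k = ∑ k, (n:ℝ) * p k := Finset.sum_congr rfl (fun k _ => ha k)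
        _ = (n:ℝ) * ∑ k, p k := by rw [Finset.mul_sum]
        _ = n := by rw [hsum, mul_one]
    · intro k
      rw [ha, ha]
      have h1 := hbd k
      calc (n:ℝ) * p k + (n:ℝ) * p (k+1) = (n:ℝ) * (p k + p (k+1)) := by ring
        _ ≤ (n:ℝ) * (1 / n) := by
          apply mul_le_mul_of_nonneg_left h1 (le_of_lt hn')
        _ = 1 := by field_simp
  · have hterm : ∀ k, -(p k) * Real.log (a k) = -(p k) * Real.log (p k) - Real.log n * p k := by
      intro k
      rw [ha, Real.log_mul (ne_of_gt hn') (ne_of_gt (hp k))]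
      ring
    rw [Finset.sum_congr rfl (fun k _ => hterm k), Finset.sum_sub_distrib, ← Finset.mul_sum,
      hsum, mul_one]
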